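/- Let N be a positive integer, let Ω₁ and Ω₂ be invertible N×N complex matrices, set M = Ω₁ Ω₂⁻¹, and let c₁, c₂ : Fin N → ℝ be functions with c₁(n) > 0 and c₂(n) > 0 for all n, regarded as diagonal matrices 𝔠₁ = diag(c₁) and 𝔠₂ = diag(c₂). Then the matrix 𝒰 = 𝔠₁ · M · 𝔠₂⁻¹ is unitary (𝒰ᴴ 𝒰 = I) if and only if Ω₁ᴴ · 𝔠₁² · Ω₁ = Ω₂ᴴ · 𝔠₂² · Ω₂. -/

import Mathlib

open Matrix

private lemma mul_mul_cancel_iff' {n : Type*} [Fintype n] [DecidableEq n]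
    {X Y A B : Matrix n n ℂ} (hX : IsUnit X) (hY : IsUnit Y) :
    X * A * Y = X * B * Y ↔ A = B := by
  constructor
  · intro h
    exact hX.mul_right_injective (hY.mul_left_injective h)
  · rintro rfl; rfl

/-- Lemma 2 of the paper: with `M = Ω₁ Ω₂⁻¹` and positive diagonal matrices
`𝔠₁ = diag c₁`, `𝔠₂ = diag c₂`, the matrix `𝒰 = 𝔠₁ M 𝔠₂⁻¹` is unitary iff
`Ω₁ᴴ 𝔠₁² Ω₁ = Ω₂ᴴ 𝔠₂² Ω₂`. -/
theorem unitary_iff_shared_metric (N : ℕ) (hN : 0 < N)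
    (Ω₁ Ω₂ : Matrix (Fin N) (Fin N) ℂ)
    (hΩ₁ : IsUnit Ω₁) (hΩ₂ : IsUnit Ω₂) (c₁ c₂ : Fin N → ℝ)
    (hc₁ : ∀ n, 0 < c₁ n) (hc₂ : ∀ n, 0 < c₂ n) :
    (Matrix.diagonal (fun n => (c₁ n : ℂ)) * (Ω₁ * Ω₂⁻¹) *
        (Matrix.diagonal fun n => (c₂ n : ℂ))⁻¹)ᴴ *
      (Matrix.diagonal (fun n => (c₁ n : ℂ)) * (Ω₁ * Ω₂⁻¹) *
        (Matrix.diagonal fun n => (c₂ n : ℂ))⁻¹) = 1 ↔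
    Ω₁ᴴ * Matrix.diagonal (fun n => ((c₁ n : ℂ)) ^ 2) * Ω₁ =
      Ω₂ᴴ * Matrix.diagonal (fun n => ((c₂ n : ℂ)) ^ 2) * Ω₂ := by
  set D₁ : Matrix (Fin N) (Fin N) ℂ := Matrix.diagonal (fun n => (c₁ n : ℂ)) with hD₁def
  set D₂ : Matrix (Fin N) (Fin N) ℂ := Matrix.diagonal (fun n => (c₂ n : ℂ)) with hD₂def
  have hD₁ : IsUnit D₁ := by
    rw [hD₁def, Matrix.isUnit_diagonal]
    exact IsUnit.of_mul_eq_one (fun n => ((c₁ n : ℂ))⁻¹)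
      (funext fun n => mul_inv_cancel₀ (show ((c₁ n : ℂ)) ≠ 0 by exact_mod_cast (hc₁ n).ne'))
  have hD₂ : IsUnit D₂ := by
    rw [hD₂def, Matrix.isUnit_diagonal]
    exact IsUnit.of_mul_eq_one (fun n => ((c₂ n : ℂ))⁻¹)
      (funext fun n => mul_inv_cancel₀ (show ((c₂ n : ℂ)) ≠ 0 by exact_mod_cast (hc₂ n).ne'))
  have hD₁H : D₁ᴴ = D₁ := by
    rw [hD₁def, Matrix.diagonal_conjTranspose]
    have hst : star (fun n => ((c₁ n : ℂ))) = fun n => ((c₁ n : ℂ)) :=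
      funext fun n => Complex.conj_ofReal _
    rw [hst]
  have hD₂H : D₂ᴴ = D₂ := by
    rw [hD₂def, Matrix.diagonal_conjTranspose]
    have hst : star (fun n => ((c₂ n : ℂ))) = fun n => ((c₂ n : ℂ)) :=
      funext fun n => Complex.conj_ofReal _
    rw [hst]
  have hsq₁ : D₁ * D₁ = Matrix.diagonal (fun n => ((c₁ n : ℂ)) ^ 2) := by
    simp [hD₁def, Matrix.diagonal_mul_diagonal, sq]
  have hsq₂ : D₂ * D₂ = Matrix.diagonal (fun n => ((c₂ n : ℂ)) ^ 2) := by
    simp [hD₂def, Matrix.diagonal_mul_diagonal, sq]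
  have hΩ₂H : IsUnit Ω₂ᴴ := (Matrix.isUnit_conjTranspose Ω₂).mpr hΩ₂
  haveI : Invertible Ω₂ := hΩ₂.invertible
  haveI : Invertible D₂ := hD₂.invertible
  haveI : Invertible Ω₂ᴴ := hΩ₂H.invertible
  -- key identities
  have key1 : (D₁ * (Ω₁ * Ω₂⁻¹) * D₂⁻¹)ᴴ * (D₁ * (Ω₁ * Ω₂⁻¹) * D₂⁻¹)
      = (D₂⁻¹ * (Ω₂ᴴ)⁻¹) *
          (Ω₁ᴴ * Matrix.diagonal (fun n => ((c₁ n : ℂ)) ^ 2) * Ω₁) *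
          (Ω₂⁻¹ * D₂⁻¹) := by
    rw [← hsq₁]
    simp only [Matrix.conjTranspose_mul, Matrix.conjTranspose_nonsing_inv,
      hD₁H, hD₂H, mul_assoc]
  have key2 : (1 : Matrix (Fin N) (Fin N) ℂ)
      = (D₂⁻¹ * (Ω₂ᴴ)⁻¹) *
          (Ω₂ᴴ * Matrix.diagonal (fun n => ((c₂ n : ℂ)) ^ 2) * Ω₂) *
          (Ω₂⁻¹ * D₂⁻¹) := by
    rw [← hsq₂]
    simp only [mul_assoc, Matrix.inv_mul_cancel_left_of_invertible,
      Matrix.mul_inv_cancel_left_of_invertible, Matrix.mul_inv_of_invertible,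
      Matrix.inv_mul_of_invertible, mul_one]
  rw [key1, show (1 : Matrix (Fin N) (Fin N) ℂ) = _ from key2]
  exact mul_mul_cancel_iff'
    ((Matrix.isUnit_nonsing_inv_iff.mpr hD₂).mul (Matrix.isUnit_nonsing_inv_iff.mpr hΩ₂H))
    ((Matrix.isUnit_nonsing_inv_iff.mpr hΩ₂).mul (Matrix.isUnit_nonsing_inv_iff.mpr hD₂))
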